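/- The implicit function ỹ(x) defined by ln(1 + ỹ(x)/x) − 1/(1 + ỹ(x)/x) = −1 + ln(n) − ln(x), for 0 < x ≤ n with ỹ(n) = 0, is a solution of the ordinary differential equation dy/dx = −x/(2x + y). -/

import Mathlib

open Set Filter Topology

private lemma F_hasDerivAt {u : ℝ} (hu : 0 < u) :
    HasStrictDerivAt (fun v : ℝ => Real.log v - 1 / v) (u⁻¹ + (u ^ 2)⁻¹) u := by
  have h1 := Real.hasStrictDerivAt_log hu.ne'
  have h2 : HasStrictDerivAt (fun v : ℝ => 1 / v) (-(u ^ 2)⁻¹) u := by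
    simpa [one_div] using hasStrictDerivAt_inv hu.ne'
  have h3 := h1.sub h2
  rw [sub_neg_eq_add] at h3
  exact h3

private lemma F_strictMono :
    StrictMonoOn (fun v : ℝ => Real.log v - 1 / v) (Ioi (0 : ℝ)) := by
  apply strictMonoOn_of_deriv_pos (convex_Ioi 0)
  · intro v hv
    exact ((F_hasDerivAt hv).hasDerivAt.differentiableAt).continuousAt.continuousWithinAt
  · intro v hv
    rw [interior_Ioi] at hv
    have hv' : (0:ℝ) < v := hv
    rw [(F_hasDerivAt hv').hasDerivAt.deriv]
    positivity

theorem implicit_solution_of_ode (n : ℝ) (hn : 0 < n) (y : ℝ → ℝ)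
    (hy_nonneg : ∀ x ∈ Ioc (0 : ℝ) n, 0 ≤ y x)
    (hy_eq : ∀ x ∈ Ioc (0 : ℝ) n,
      Real.log (1 + y x / x) - 1 / (1 + y x / x) = -1 + Real.log n - Real.log x)
    (hyn : y n = 0) :
    ∀ x ∈ Ioo (0 : ℝ) n, HasDerivAt y (-x / (2 * x + y x)) x := by
  intro x₀ hx₀
  obtain ⟨hx₀0, hx₀n⟩ := hx₀
  have hx₀mem : x₀ ∈ Ioc (0 : ℝ) n := ⟨hx₀0, hx₀n.le⟩
  set F : ℝ → ℝ := fun v => Real.log v - 1 / v with hF_def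
  set c : ℝ → ℝ := fun x => -1 + Real.log n - Real.log x with hc_def
  set u₀ : ℝ := 1 + y x₀ / x₀ with hu₀_def
  have hyx₀ : 0 ≤ y x₀ := hy_nonneg x₀ hx₀mem
  have hu₀1 : 1 ≤ u₀ := le_add_of_nonneg_right (by positivity)
  have hu₀pos : 0 < u₀ := lt_of_lt_of_le one_pos hu₀1
  set f' : ℝ := u₀⁻¹ + (u₀ ^ 2)⁻¹ with hf'_def
  have hf'pos : 0 < f' := by positivity
  have hF : HasStrictDerivAt F f' u₀ := F_hasDerivAt hu₀pos
  set G : ℝ → ℝ := hF.localInverse F f' u₀ hf'pos.ne' with hG_def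
  have hFu₀ : F u₀ = c x₀ := hy_eq x₀ hx₀mem
  have hG0 : G (c x₀) = u₀ := by
    rw [← hFu₀]
    exact (hF.hasStrictFDerivAt_equiv hf'pos.ne').localInverse_apply_image
  have hGderiv : HasStrictDerivAt G f'⁻¹ (c x₀) := hFu₀ ▸ hF.to_localInverse hf'pos.ne'
  have hc : HasDerivAt c (-x₀⁻¹) x₀ := by
    have := (Real.hasDerivAt_log hx₀0.ne').const_sub (-1 + Real.log n)
    simpa [hc_def, sub_sub] using this
  -- eventually, y x = x * (G (c x) - 1)
  have hev : (fun x => x * (G (c x) - 1)) =ᶠ[𝓝 x₀] y := by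
    have e1 : ∀ᶠ x in 𝓝 x₀, x ∈ Ioo (0 : ℝ) n :=
      isOpen_Ioo.eventually_mem ⟨hx₀0, hx₀n⟩
    have e2 : ∀ᶠ x in 𝓝 x₀, F (G (c x)) = c x := by
      have h := (hF.hasStrictFDerivAt_equiv hf'pos.ne').eventually_right_inverse
      rw [hFu₀] at h
      exact hc.continuousAt.eventually h
    have e3 : ∀ᶠ x in 𝓝 x₀, 0 < G (c x) := by
      have hGc : ContinuousAt G (c x₀) := hGderiv.hasDerivAt.continuousAt
      have : ∀ᶠ v in 𝓝 (c x₀), 0 < G v := by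
        have := hGc.eventually_mem (Ioi_mem_nhds (hG0 ▸ hu₀pos))
        simpa using this
      exact hc.continuousAt.eventually this
    filter_upwards [e1, e2, e3] with x hx hfg hGpos
    have hxmem : x ∈ Ioc (0 : ℝ) n := ⟨hx.1, hx.2.le⟩
    have hux : (0 : ℝ) < 1 + y x / x := by
      have := hy_nonneg x hxmem
      have hx0 : 0 < x := hx.1
      positivity
    have hFeq : F (1 + y x / x) = c x := hy_eq x hxmem
    have : G (c x) = 1 + y x / x :=
      F_strictMono.injOn hGpos hux (hfg.trans hFeq.symm)
    rw [this]
    field_simp [hx.1.ne']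
    ring
  -- derivative of the explicit function
  have hGc : HasDerivAt (fun x => G (c x)) (f'⁻¹ * -x₀⁻¹) x₀ :=
    hGderiv.hasDerivAt.comp x₀ hc
  have hh : HasDerivAt (fun x => x * (G (c x) - 1))
      (1 * (G (c x₀) - 1) + x₀ * (f'⁻¹ * -x₀⁻¹)) x₀ :=
    (hasDerivAt_id x₀).mul (hGc.sub_const 1)
  have := hh.congr_of_eventuallyEq hev.symm
  refine this.congr_deriv (Eq.symm ?_)
  rw [hG0]
  have hx₀ne : x₀ ≠ 0 := hx₀0.ne'
  have hden : 2 * x₀ + y x₀ > 0 := by positivity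
  rw [hu₀_def] at hf'_def ⊢
  rw [hf'_def]
  field_simp
  ring
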